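/- Let F be a field, R the ring of ternions over F, and n ≥ 1. A subset of F^{n+1} is a 1-dimensional F-linear subspace if and only if it is the image, under the coordinate bijection (rad R)^{n+1} → F^{n+1}, of the intersection M ∩ (rad R)^{n+1} for some unimodular free cyclic submodule M of R^{n+1} (i.e., a free cyclic submodule generated by a unimodular vector). -/

import Mathlib

set_option synthInstance.maxHeartbeats 1000000
set_option maxHeartbeats 1000000

/-- The ring of ternions over a field `F`: the subring of `2×2` matrices over `F`
consisting of all upper triangular matrices. -/
def ternions (F : Type) [Field F] : Subring (Matrix (Fin 2) (Fin 2) F) where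
  carrier := {A | A 1 0 = 0}
  zero_mem' := by simp
  one_mem' := by simp [Matrix.one_apply]
  add_mem' := by
    intro a b ha hb
    simp only [Set.mem_setOf_eq, Matrix.add_apply] at *
    simp [ha, hb]
  neg_mem' := by
    intro a ha
    simp only [Set.mem_setOf_eq, Matrix.neg_apply] at *
    simp [ha]
  mul_mem' := by
    intro a b ha hb
    simp only [Set.mem_setOf_eq, Matrix.mul_apply, Fin.sum_univ_two] at *
    simp [ha, hb]

namespace TernAux

variable {F : Type} [Field F]

def tern (a b c : F) : ternions F := ⟨Matrix.of ![![a, b], ![0, c]], by show _ = 0; rfl⟩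

@[simp] lemma tern00 (a b c : F) : (tern a b c).val 0 0 = a := rfl
@[simp] lemma tern01 (a b c : F) : (tern a b c).val 0 1 = b := rfl
@[simp] lemma tern10 (a b c : F) : (tern a b c).val 1 0 = 0 := rfl
@[simp] lemma tern11 (a b c : F) : (tern a b c).val 1 1 = c := rfl

lemma low (x : ternions F) : x.val 1 0 = 0 := x.2

lemma eq_tern (x : ternions F) : x = tern (x.val 0 0) (x.val 0 1) (x.val 1 1) := by
  apply Subtype.ext
  ext i j
  fin_cases i <;> fin_cases j <;> simp [low]

lemma coe_mul (x y : ternions F) : ((x*y) : ternions F).val = x.val * y.val := rfl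

lemma mul00 (x y : ternions F) : ((x*y) : ternions F).val 0 0 = x.val 0 0 * y.val 0 0 := by
  rw [coe_mul, Matrix.mul_apply, Fin.sum_univ_two, low y]; ring

lemma mul01 (x y : ternions F) :
    ((x*y) : ternions F).val 0 1 = x.val 0 0 * y.val 0 1 + x.val 0 1 * y.val 1 1 := by
  rw [coe_mul, Matrix.mul_apply, Fin.sum_univ_two]

lemma mul11 (x y : ternions F) : ((x*y) : ternions F).val 1 1 = x.val 1 1 * y.val 1 1 := by
  rw [coe_mul, Matrix.mul_apply, Fin.sum_univ_two, low x]; ring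

lemma tern_mul (a b c a' b' c' : F) :
    tern a b c * tern a' b' c' = tern (a*a') (a*b'+b*c') (c*c') := by
  conv_lhs => rw [eq_tern (tern a b c * tern a' b' c')]
  rw [mul00, mul01, mul11]; simp

lemma tern_add (a b c a' b' c' : F) :
    tern a b c + tern a' b' c' = tern (a+a') (b+b') (c+c') := by
  apply Subtype.ext
  ext i j
  fin_cases i <;> fin_cases j <;> simp [tern]

lemma one_eq : (1 : ternions F) = tern 1 0 1 := by
  apply Subtype.ext
  ext i j
  fin_cases i <;> fin_cases j <;> simp [tern, Matrix.one_apply]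

lemma zero_eq : (0 : ternions F) = tern 0 0 0 := by
  apply Subtype.ext
  ext i j
  fin_cases i <;> fin_cases j <;> simp [tern]

lemma tern_inj {a b c a' b' c' : F} (h : tern a b c = tern a' b' c') :
    a = a' ∧ b = b' ∧ c = c' := by
  refine ⟨?_, ?_, ?_⟩
  · have := congrFun (congrFun (congrArg Subtype.val h) 0) 0; simpa using this
  · have := congrFun (congrFun (congrArg Subtype.val h) 0) 1; simpa using this
  · have := congrFun (congrFun (congrArg Subtype.val h) 1) 1; simpa using this

def rmul (a : ternions F) : ternions F →ₗ[ternions F] ternions F where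
  toFun x := x * a
  map_add' x y := add_mul x y a
  map_smul' r x := by simp [mul_assoc]

end TernAux

open TernAux in
/-- A subset of `F^{n+1}` is a `1`-dimensional `F`-linear subspace if and only if it is
the image, under the coordinate bijection `(rad R)^{n+1} → F^{n+1}`, of the intersection
`M ∩ (rad R)^{n+1}` for some unimodular free cyclic submodule `M = R·X` of `R^{n+1}`. -/
theorem ternion_point_iff_trace_of_unimodular_free (F : Type) [Field F] (n : ℕ)
    (hn : 1 ≤ n) (S : Set (Fin (n + 1) → F)) :
    (∃ W : Submodule F (Fin (n + 1) → F), Module.finrank F W = 1 ∧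
        (W : Set (Fin (n + 1) → F)) = S) ↔
      ∃ X : Fin (n + 1) → ternions F,
        Function.Injective (fun r : ternions F => r • X) ∧
        (∃ φ : (Fin (n + 1) → ternions F) →ₗ[ternions F] ternions F, φ X = 1) ∧
        S = (fun v : Fin (n + 1) → ternions F => fun i => (v i).val 0 1) ''
          {v : Fin (n + 1) → ternions F | v ∈ Submodule.span (ternions F) {X} ∧
            ∀ i, (v i).val 0 0 = 0 ∧ (v i).val 1 1 = 0} := by
  constructor
  · rintro ⟨W, hW1, rfl⟩
    obtain ⟨v0, hv0, hvall⟩ := finrank_eq_one_iff'.mp hW1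
    set w : Fin (n+1) → F := v0.val with hwdef
    have hwW : w ∈ W := v0.2
    have hw : w ≠ 0 := fun h => hv0 (Subtype.ext h)
    obtain ⟨j, hj⟩ := Function.ne_iff.mp hw
    have hj : w j ≠ 0 := by simpa using hj
    have hnt : Nontrivial (Fin (n+1)) := Fin.nontrivial_iff_two_le.mpr (by omega)
    obtain ⟨k, hk⟩ := exists_ne j
    set X : Fin (n+1) → ternions F :=
      fun i => tern (if i = k then 1 else 0) 0 (w i) with hX
    have hXk : X k = tern 1 0 (w k) := by simp [hX]
    have hXj : X j = tern 0 0 (w j) := by simp [hX, hk.symm]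
    have hmemW : ∀ x, x ∈ W ↔ ∃ q : F, q • w = x := by
      intro x
      constructor
      · intro hx
        obtain ⟨q, hq⟩ := hvall ⟨x, hx⟩
        exact ⟨q, congrArg Subtype.val hq⟩
      · rintro ⟨q, rfl⟩
        exact W.smul_mem q hwW
    refine ⟨X, ?_, ?_, ?_⟩
    · -- injectivity
      have key : ∀ r : ternions F, r • X = 0 → r = 0 := by
        intro r hr
        have hk' : r * X k = 0 := by
          have := congrFun hr k
          simpa using this
        have hj' : r * X j = 0 := by
          have := congrFun hr j
          simpa using this
        have h00 : r.val 0 0 = 0 := by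
          have := congrFun (congrFun (congrArg Subtype.val hk') 0) 0
          rw [mul00, hXk] at this
          simpa using this
        have h01 : r.val 0 1 = 0 := by
          have := congrFun (congrFun (congrArg Subtype.val hj') 0) 1
          rw [mul01, hXj] at this
          simp only [tern01, tern11, mul_zero, zero_add] at this
          exact (mul_eq_zero.mp (by simpa using this)).resolve_right hj
        have h11 : r.val 1 1 = 0 := by
          have := congrFun (congrFun (congrArg Subtype.val hj') 1) 1
          rw [mul11, hXj] at this
          simp only [tern11] at this
          exact (mul_eq_zero.mp (by simpa using this)).resolve_right hj
        rw [eq_tern r, h00, h01, h11, ← zero_eq]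
      intro r₁ r₂ h
      have h' : (r₁ - r₂) • X = 0 := by
        rw [sub_smul, sub_eq_zero]
        exact h
      have := key _ h'
      exact sub_eq_zero.mp this
    · -- unimodular
      refine ⟨rmul (tern 1 0 0) ∘ₗ LinearMap.proj k + rmul (tern 0 0 (w j)⁻¹) ∘ₗ LinearMap.proj j, ?_⟩
      show X k * tern 1 0 0 + X j * tern 0 0 (w j)⁻¹ = 1
      rw [hXk, hXj, tern_mul, tern_mul, tern_add, one_eq]
      congr 1 <;> field_simp <;> ring
    · -- set equality
      ext x
      simp only [Set.mem_image, Set.mem_setOf_eq, SetLike.mem_coe]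
      constructor
      · intro hx
        obtain ⟨q, rfl⟩ := (hmemW x).mp hx
        refine ⟨tern 0 q 0 • X, ⟨Submodule.mem_span_singleton.mpr ⟨tern 0 q 0, rfl⟩, ?_⟩, ?_⟩
        · intro i
          constructor
          · show ((tern 0 q 0 * X i) : ternions F).val 0 0 = 0
            rw [mul00]; simp [hX]
          · show ((tern 0 q 0 * X i) : ternions F).val 1 1 = 0
            rw [mul11]; simp [hX]
        · funext i
          show ((tern 0 q 0 * X i) : ternions F).val 0 1 = q * w i
          rw [mul01]; simp [hX]
      · rintro ⟨v, ⟨hvspan, hvcond⟩, rfl⟩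
        obtain ⟨r, rfl⟩ := Submodule.mem_span_singleton.mp hvspan
        have : (fun i => (((r • X) i) : ternions F).val 0 1) = (r.val 0 1) • w := by
          funext i
          show ((r * X i) : ternions F).val 0 1 = _
          rw [mul01]; simp [hX]
        rw [this]
        exact (hmemW _).mpr ⟨r.val 0 1, rfl⟩
  · rintro ⟨X, hinj, ⟨φ, hφ⟩, rfl⟩
    classical
    set e : Fin (n+1) → (Fin (n+1) → ternions F) := fun i => Pi.single i 1 with he
    have hXsum : X = ∑ i, X i • e i := by
      funext l
      rw [Finset.sum_apply]
      simp [he, Pi.single_apply]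
    have h1 : ∑ i, X i * φ (e i) = 1 := by
      rw [← hφ]
      conv_rhs => rw [hXsum]
      rw [map_sum]
      exact Finset.sum_congr rfl fun i _ => by rw [map_smul, smul_eq_mul]
    have hsum00 : ∀ (p q : Fin 2),
        ((∑ i, X i * φ (e i)) : ternions F).val p q
          = ∑ i, ((X i * φ (Pi.single i 1)) : ternions F).val p q := by
      intro p q
      rw [AddSubmonoidClass.coe_finset_sum, Matrix.sum_apply]
    have ha : ∃ i, (X i).val 0 0 ≠ 0 := by
      by_contra h
      push_neg at h
      have h00 := hsum00 0 0
      rw [h1] at h00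
      rw [Finset.sum_eq_zero (fun i _ => by rw [mul00, h i, zero_mul])] at h00
      rw [one_eq] at h00
      simp at h00
    have hc : ∃ i, (X i).val 1 1 ≠ 0 := by
      by_contra h
      push_neg at h
      have h11 := hsum00 1 1
      rw [h1] at h11
      rw [Finset.sum_eq_zero (fun i _ => by rw [mul11, h i, zero_mul])] at h11
      rw [one_eq] at h11
      simp at h11
    obtain ⟨i0, hi0⟩ := ha
    obtain ⟨j0, hj0⟩ := hc
    set w : Fin (n+1) → F := fun i => (X i).val 1 1 with hwdef
    have hw : w ≠ 0 := fun h => hj0 (congrFun h j0)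
    refine ⟨Submodule.span F {w}, finrank_span_singleton hw, ?_⟩
    ext x
    simp only [Set.mem_image, Set.mem_setOf_eq, SetLike.mem_coe]
    rw [Submodule.mem_span_singleton]
    constructor
    · rintro ⟨q, rfl⟩
      refine ⟨tern 0 q 0 • X, ⟨Submodule.mem_span_singleton.mpr ⟨tern 0 q 0, rfl⟩, ?_⟩, ?_⟩
      · intro i
        constructor
        · show ((tern 0 q 0 * X i) : ternions F).val 0 0 = 0
          rw [mul00]; simp
        · show ((tern 0 q 0 * X i) : ternions F).val 1 1 = 0
          rw [mul11]; simp
      · funext i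
        show ((tern 0 q 0 * X i) : ternions F).val 0 1 = (q • w) i
        rw [mul01]; simp [hwdef]
    · rintro ⟨v, ⟨hvspan, hvcond⟩, rfl⟩
      obtain ⟨r, rfl⟩ := Submodule.mem_span_singleton.mp hvspan
      have hr00 : r.val 0 0 = 0 := by
        have := (hvcond i0).1
        have h' : ((r * X i0) : ternions F).val 0 0 = 0 := this
        rw [mul00] at h'
        exact (mul_eq_zero.mp h').resolve_right hi0
      refine ⟨r.val 0 1, ?_⟩
      funext i
      show r.val 0 1 * w i = ((r * X i) : ternions F).val 0 1
      rw [mul01, hr00, zero_mul, zero_add]
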